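/- When ρ = ρ_crit(σ) (and σ ∈ [σ_j, σ_{j−1}]), the optimal apparent profile equals the population profile: defining r_k = p_k(1 + ρ_crit(σ) − σ) − q_k for k = 1,...,j−1 and s_k = q_k − p_k(1 + ρ_crit(σ) − σ) for k = j,...,n (all other components zero), we have t_k = (q_k + r_k − s_k)/(1 + ρ_crit(σ) − σ) = p_k for all k, and hence D(t‖p) = 0. -/

import Mathlib

lemma ratio_chain (n : ℕ) (q p : ℕ → ℝ)
    (hmono : ∀ k, 1 ≤ k → k < n → q k / p k ≤ q (k+1) / p (k+1)) :
    ∀ a b, 1 ≤ a → a ≤ b → b ≤ n → q a / p a ≤ q b / p b := by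
  intro a b ha hab hbn
  induction b with
  | zero => omega
  | succ m ih =>
    rcases Nat.lt_or_ge a (m+1) with h | h
    · exact le_trans (ih (by omega) (by omega)) (hmono m (by omega) (by omega))
    · have : a = m + 1 := by omega
      subst this; exact le_refl _

/-- At the critical threshold ρ = ρ_crit(σ), the strategies
r_k = p_k(1+ρ_crit−σ) − q_k (k < j) and s_k = q_k − p_k(1+ρ_crit−σ) (k ≥ j) are
nonnegative, sum to ρ_crit(σ) and σ respectively, and make the apparent profile
equal the population profile, so the KL divergence vanishes. -/
theorem critical_threshold_zero_risk
    (n : ℕ) (hn : 2 ≤ n) (q p : ℕ → ℝ)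
    (hq : ∀ k ∈ Finset.Icc 1 n, 0 < q k) (hp : ∀ k ∈ Finset.Icc 1 n, 0 < p k)
    (hqsum : ∑ k ∈ Finset.Icc 1 n, q k = 1) (hpsum : ∑ k ∈ Finset.Icc 1 n, p k = 1)
    (hmono : ∀ k, 1 ≤ k → k < n → q k / p k ≤ q (k+1) / p (k+1))
    (j : ℕ) (hj2 : 2 ≤ j) (hjn : j ≤ n)
    (σ ρc : ℝ)
    (hσlo : (∑ k ∈ Finset.Icc j n, q k)
              - (∑ k ∈ Finset.Icc j n, p k) * (q j / p j) ≤ σ)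
    (hσhi : σ ≤ (∑ k ∈ Finset.Icc (j-1) n, q k)
              - (∑ k ∈ Finset.Icc (j-1) n, p k) * (q (j-1) / p (j-1)))
    (hρc : ρc = ((∑ k ∈ Finset.Icc 1 (j-1), p k) / (∑ k ∈ Finset.Icc j n, p k))
              * ((∑ k ∈ Finset.Icc j n, q k) - σ) - ∑ k ∈ Finset.Icc 1 (j-1), q k)
    (r s t : ℕ → ℝ)
    (hr : ∀ k, r k = if k ≤ j - 1 then p k * (1 + ρc - σ) - q k else 0)
    (hs : ∀ k, s k = if j ≤ k then q k - p k * (1 + ρc - σ) else 0)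
    (ht : ∀ k, t k = (q k + r k - s k) / (1 + ρc - σ)) :
    (∀ k ∈ Finset.Icc 1 n, 0 ≤ r k) ∧
    (∀ k ∈ Finset.Icc 1 n, 0 ≤ s k) ∧
    (∑ k ∈ Finset.Icc 1 n, r k = ρc) ∧
    (∑ k ∈ Finset.Icc 1 n, s k = σ) ∧
    (∀ k ∈ Finset.Icc 1 n, t k = p k) ∧
    (∑ k ∈ Finset.Icc 1 n, t k * Real.logb 2 (t k / p k) = 0) := by
  have hjsub : j - 1 + 1 = j := by omega
  -- interval splitting
  have e1 : Finset.Icc 1 n = Finset.Ioc 0 n := by rw [← Finset.Icc_add_one_left_eq_Ioc]; rfl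
  have e2 : Finset.Icc 1 (j-1) = Finset.Ioc 0 (j-1) := by rw [← Finset.Icc_add_one_left_eq_Ioc]; rfl
  have e3 : Finset.Icc j n = Finset.Ioc (j-1) n := by
    conv_lhs => rw [← hjsub]
    rw [Finset.Icc_add_one_left_eq_Ioc]
  have hsplit : ∀ f : ℕ → ℝ, ∑ k ∈ Finset.Icc 1 n, f k
      = ∑ k ∈ Finset.Icc 1 (j-1), f k + ∑ k ∈ Finset.Icc j n, f k := by
    intro f
    rw [e1, e2, e3, Finset.sum_Ioc_consecutive f (Nat.zero_le (j-1)) (by omega)]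
  set P1 := ∑ k ∈ Finset.Icc 1 (j-1), p k with hP1
  set Pj := ∑ k ∈ Finset.Icc j n, p k with hPj
  set Q1 := ∑ k ∈ Finset.Icc 1 (j-1), q k with hQ1
  set Qj := ∑ k ∈ Finset.Icc j n, q k with hQj
  have hPsplit : P1 + Pj = 1 := by rw [← hsplit p]; exact hpsum
  have hQsplit : Q1 + Qj = 1 := by rw [← hsplit q]; exact hqsum
  have hPjpos : 0 < Pj :=
    Finset.sum_pos (fun k hk => hp k (by simp only [Finset.mem_Icc] at hk ⊢; omega))
      ⟨j, by simp [Finset.mem_Icc, hjn]⟩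
  have hpj1pos : 0 < p (j-1) := hp _ (by simp [Finset.mem_Icc]; omega)
  have hqj1pos : 0 < q (j-1) := hq _ (by simp [Finset.mem_Icc]; omega)
  have hpjpos : 0 < p j := hp _ (by simp [Finset.mem_Icc]; omega)
  have hPjne : Pj ≠ 0 := ne_of_gt hPjpos
  -- value of c := 1 + ρc - σ
  set c := 1 + ρc - σ with hcdef
  clear_value P1 Pj Q1 Qj c
  have key : P1 / Pj * (Qj - σ) * Pj = P1 * (Qj - σ) := by field_simp
  have hcPj : c * Pj = Qj - σ := by
    rw [hcdef, hρc]
    linear_combination key + (Qj - σ) * hPsplit - Pj * hQsplit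
  -- σ bound rewrites
  have ein : Finset.Icc (j-1) n = insert (j-1) (Finset.Icc j n) := by
    rw [e3, Finset.Ioc_insert_left (by omega : j - 1 ≤ n)]
  have hnotmem : j - 1 ∉ Finset.Icc j n := by simp [Finset.mem_Icc]; omega
  have hσhi' : σ ≤ (q (j-1) + Qj) - (p (j-1) + Pj) * (q (j-1) / p (j-1)) := by
    rw [ein, Finset.sum_insert hnotmem, Finset.sum_insert hnotmem, ← hPj, ← hQj] at hσhi
    exact hσhi
  have hRj1 : p (j-1) * (q (j-1) / p (j-1)) = q (j-1) := by field_simp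
  -- c ≥ q(j-1)/p(j-1)
  have hclo : q (j-1) / p (j-1) ≤ c := by
    have hexp : (p (j-1) + Pj) * (q (j-1) / p (j-1))
        = q (j-1) + Pj * (q (j-1) / p (j-1)) := by rw [add_mul, hRj1]
    have h2 : q (j-1) / p (j-1) * Pj ≤ c * Pj := by
      rw [hcPj]; nlinarith [hσhi', hexp]
    exact (mul_le_mul_iff_of_pos_right hPjpos).mp h2
  -- c ≤ q j / p j
  have hchi : c ≤ q j / p j := by
    have h2 : c * Pj ≤ q j / p j * Pj := by rw [hcPj]; nlinarith [hσlo]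
    exact (mul_le_mul_iff_of_pos_right hPjpos).mp h2
  have hcpos : 0 < c := lt_of_lt_of_le (div_pos hqj1pos hpj1pos) hclo
  have hcne : c ≠ 0 := ne_of_gt hcpos
  -- nonnegativity of r
  have hrnn : ∀ k ∈ Finset.Icc 1 n, 0 ≤ r k := by
    intro k hk
    simp only [Finset.mem_Icc] at hk
    rw [hr k]
    by_cases h : k ≤ j - 1
    · simp only [h, if_true]
      have hpk : 0 < p k := hp k (by simp [Finset.mem_Icc]; omega)
      have hratio : q k / p k ≤ q (j-1) / p (j-1) :=
        ratio_chain n q p hmono k (j-1) hk.1 h (by omega)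
      have : q k / p k ≤ c := le_trans hratio hclo
      rw [div_le_iff₀ hpk] at this
      nlinarith
    · simp [h]
  -- nonnegativity of s
  have hsnn : ∀ k ∈ Finset.Icc 1 n, 0 ≤ s k := by
    intro k hk
    simp only [Finset.mem_Icc] at hk
    rw [hs k]
    by_cases h : j ≤ k
    · simp only [h, if_true]
      have hpk : 0 < p k := hp k (by simp [Finset.mem_Icc]; omega)
      have hratio : q j / p j ≤ q k / p k :=
        ratio_chain n q p hmono j k (by omega) h hk.2
      have : c ≤ q k / p k := le_trans hchi hratio
      rw [le_div_iff₀ hpk] at this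
      nlinarith
    · simp [h]
  -- sum of r
  have hrsum : ∑ k ∈ Finset.Icc 1 n, r k = ρc := by
    rw [hsplit r]
    have h1 : ∑ k ∈ Finset.Icc 1 (j-1), r k = P1 * c - Q1 := by
      rw [hP1, hQ1, Finset.sum_mul, ← Finset.sum_sub_distrib]
      apply Finset.sum_congr rfl
      intro k hk
      simp only [Finset.mem_Icc] at hk
      rw [hr k, if_pos hk.2, hcdef]
    have h2 : ∑ k ∈ Finset.Icc j n, r k = 0 := by
      apply Finset.sum_eq_zero
      intro k hk
      simp only [Finset.mem_Icc] at hk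
      rw [hr k, if_neg (by omega)]
    have hceq : c = (Qj - σ) / Pj := by rw [eq_div_iff hPjne]; exact hcPj
    rw [h1, h2, add_zero, hρc, hceq]
    ring
  -- sum of s
  have hssum : ∑ k ∈ Finset.Icc 1 n, s k = σ := by
    rw [hsplit s]
    have h1 : ∑ k ∈ Finset.Icc 1 (j-1), s k = 0 := by
      apply Finset.sum_eq_zero
      intro k hk
      simp only [Finset.mem_Icc] at hk
      rw [hs k, if_neg (by omega)]
    have h2 : ∑ k ∈ Finset.Icc j n, s k = Qj - Pj * c := by
      rw [hQj, hPj, Finset.sum_mul, ← Finset.sum_sub_distrib]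
      apply Finset.sum_congr rfl
      intro k hk
      simp only [Finset.mem_Icc] at hk
      rw [hs k, if_pos hk.1, hcdef]
    have hPc : Pj * c = Qj - σ := by rw [mul_comm]; exact hcPj
    rw [h1, h2, zero_add, hPc]
    ring
  -- t = p
  have htp : ∀ k ∈ Finset.Icc 1 n, t k = p k := by
    intro k hk
    simp only [Finset.mem_Icc] at hk
    rw [ht k, hr k, hs k]
    by_cases h : k ≤ j - 1
    · rw [if_pos h, if_neg (by omega)]
      field_simp
      ring
    · rw [if_neg h, if_pos (by omega)]
      field_simp
      ring
  refine ⟨hrnn, hsnn, hrsum, hssum, htp, ?_⟩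
  apply Finset.sum_eq_zero
  intro k hk
  have hpk : 0 < p k := hp k hk
  rw [htp k hk, div_self (ne_of_gt hpk), Real.logb_one, mul_zero]
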